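/- Let X be an N×P real matrix such that XᵀX is invertible and y ∈ ℝᴺ. Define the iteration β⁽ᵏ⁺¹⁾ = β⁽ᵏ⁾ + δ Xᵀ(y − Xβ⁽ᵏ⁾) with β⁽⁰⁾ = 0. If 0 < δ < 2/S(XᵀX), where S(XᵀX) is the spectral radius of XᵀX, then β⁽ᵏ⁾ converges to the ordinary least squares solution (XᵀX)⁻¹Xᵀy as k → ∞. -/

import Mathlib

open Matrix Filter

/-- Spectral radius of a real matrix: sup of absolute values of its real spectrum. -/
noncomputable def specRad {P : ℕ} (A : Matrix (Fin P) (Fin P) ℝ) : ℝ :=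
  sSup {r : ℝ | ∃ μ ∈ spectrum ℝ A, r = |μ|}

theorem stmt0 {N P : ℕ} (X : Matrix (Fin N) (Fin P) ℝ) (y : Fin N → ℝ)
    (hinv : IsUnit (Xᵀ * X)) (δ : ℝ)
    (hδ0 : 0 < δ) (hδ1 : δ < 2 / specRad (Xᵀ * X))
    (β : ℕ → Fin P → ℝ) (h0 : β 0 = 0)
    (hrec : ∀ k, β (k + 1) = β k + δ • (Xᵀ.mulVec (y - X.mulVec (β k)))) :
    Tendsto β atTop (nhds ((Xᵀ * X)⁻¹.mulVec (Xᵀ.mulVec y))) := by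
  classical
  rcases Nat.eq_zero_or_pos P with hP | hP
  · subst hP
    have : β = fun _ => (Xᵀ * X)⁻¹.mulVec (Xᵀ.mulVec y) :=
      funext fun k => Subsingleton.elim _ _
    rw [this]; exact tendsto_const_nhds
  set A : Matrix (Fin P) (Fin P) ℝ := Xᵀ * X with hAdef
  have hT : Xᵀ = Xᴴ := (conjTranspose_eq_transpose_of_trivial X).symm
  have hA : A.IsHermitian := by rw [hAdef, hT]; exact isHermitian_conjTranspose_mul_self X
  set ev : Fin P → ℝ := hA.eigenvalues with hev
  -- eigenvalues are nonnegative
  have hPSD : A.PosSemidef := by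
    rw [hAdef, hT]; exact posSemidef_conjTranspose_mul_self X
  have hnn : ∀ i, 0 ≤ ev i := fun i => hPSD.eigenvalues_nonneg i
  -- eigenvalues are nonzero
  have hdet : A.det ≠ 0 := by
    have := (isUnit_iff_isUnit_det A).mp hinv
    exact this.ne_zero
  have hne : ∀ i, ev i ≠ 0 := by
    intro i hi
    apply hdet
    have h := hA.det_eq_prod_eigenvalues
    rw [h]
    exact Finset.prod_eq_zero (Finset.mem_univ i) (by exact_mod_cast hi)
  have hpos : ∀ i, 0 < ev i := fun i => lt_of_le_of_ne (hnn i) (Ne.symm (hne i))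
  -- spectral radius bounds
  have hfin : {r : ℝ | ∃ μ ∈ spectrum ℝ A, r = |μ|}.Finite := by
    have : {r : ℝ | ∃ μ ∈ spectrum ℝ A, r = |μ|} = (fun μ => |μ|) '' spectrum ℝ A := by
      ext r; simp [eq_comm]
    rw [this]
    exact (A.finite_spectrum).image _
  have hle : ∀ i, ev i ≤ specRad A := by
    intro i
    have hmem : |ev i| ∈ {r : ℝ | ∃ μ ∈ spectrum ℝ A, r = |μ|} :=
      ⟨ev i, hA.eigenvalues_mem_spectrum_real i, rfl⟩
    calc ev i ≤ |ev i| := le_abs_self _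
    _ ≤ specRad A := le_csSup hfin.bddAbove hmem
  have hSpos : 0 < specRad A := lt_of_lt_of_le (hpos ⟨0, hP⟩) (hle ⟨0, hP⟩)
  have hδS : δ * specRad A < 2 := (lt_div_iff₀ hSpos).mp hδ1
  have hd : ∀ i, |1 - δ * ev i| < 1 := by
    intro i
    rw [abs_lt]
    constructor
    · have h1 : δ * ev i ≤ δ * specRad A := by
        apply mul_le_mul_of_nonneg_left (hle i) hδ0.le
      linarith
    · have := mul_pos hδ0 (hpos i)
      linarith
  -- least squares solution
  set βs : Fin P → ℝ := A⁻¹.mulVec (Xᵀ.mulVec y) with hβs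
  have hAβs : A.mulVec βs = Xᵀ.mulVec y := by
    rw [hβs, mulVec_mulVec, mul_nonsing_inv A ((isUnit_iff_isUnit_det A).mp hinv),
      one_mulVec]
  set M : Matrix (Fin P) (Fin P) ℝ := 1 - δ • A with hM
  have hk : ∀ k, β k = βs + (M ^ k).mulVec (β 0 - βs) := by
    intro k
    induction k with
    | zero => simp [pow_zero, one_mulVec]
    | succ k ih =>
      rw [hrec k, ih, pow_succ', ← mulVec_mulVec]
      set w := (M ^ k).mulVec (β 0 - βs) with hw
      have hMw : M.mulVec w = w - δ • A.mulVec w := by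
        rw [hM, sub_mulVec, one_mulVec, smul_mulVec]
      rw [hMw]
      simp only [mulVec_sub, mulVec_add, mulVec_mulVec, ← hAdef]
      rw [hAβs]
      simp only [smul_sub, smul_add]
      abel
  -- diagonalization
  set U : Matrix (Fin P) (Fin P) ℝ := (hA.eigenvectorUnitary : Matrix (Fin P) (Fin P) ℝ)
    with hU
  have hUsU : U * star U = 1 := by
    rw [hU]; exact (Matrix.mem_unitaryGroup_iff).mp hA.eigenvectorUnitary.2
  have hsUU : star U * U = 1 := by
    rw [hU]; exact (Matrix.mem_unitaryGroup_iff').mp hA.eigenvectorUnitary.2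
  have hAspec : A = U * diagonal ev * star U := by
    have := hA.spectral_theorem
    simpa using this
  set d : Fin P → ℝ := fun i => 1 - δ * ev i with hdd
  have hMdiag : M = U * diagonal d * star U := by
    have h1 : diagonal d = 1 - δ • diagonal ev := by
      rw [← Matrix.diagonal_one, ← diagonal_smul, ← diagonal_sub]
      congr 1
    rw [hM, hAspec, h1, Matrix.mul_sub, Matrix.mul_one, Matrix.sub_mul, hUsU,
      Matrix.mul_smul, Matrix.smul_mul]
  have hMk : ∀ k, M ^ k = U * diagonal (fun i => d i ^ k) * star U := by
    intro k
    have hcancel : ∀ B : Matrix (Fin P) (Fin P) ℝ, star U * (U * B) = B := fun B => by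
      rw [← Matrix.mul_assoc, hsUU, Matrix.one_mul]
    induction k with
    | zero => simp [pow_zero, hUsU]
    | succ k ih =>
      rw [pow_succ, ih, hMdiag]
      simp only [Matrix.mul_assoc]
      rw [hcancel, ← Matrix.mul_assoc (diagonal (fun i => d i ^ k)) (diagonal d) (star U),
        diagonal_mul_diagonal]
      have hfun : (fun i => d i ^ k * d i) = fun i => d i ^ (k + 1) :=
        funext fun i => by rw [pow_succ]
      rw [hfun]
  -- convergence of M^k to 0
  have hDtend : Tendsto (fun k => diagonal (fun i => d i ^ k) :
      ℕ → Matrix (Fin P) (Fin P) ℝ) atTop (nhds 0) := by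
    refine tendsto_pi_nhds.mpr ?_
    intro i
    rw [tendsto_pi_nhds]
    intro j
    rcases eq_or_ne i j with rfl | hij
    · simp only [diagonal_apply_eq]
      have := tendsto_pow_atTop_nhds_zero_of_abs_lt_one (hd i)
      simpa using this
    · simp only [diagonal_apply_ne _ hij]
      simpa using tendsto_const_nhds (α := ℝ) (f := atTop (α := ℕ))
  have hcont : Continuous (fun B : Matrix (Fin P) (Fin P) ℝ => U * B * star U) :=
    (continuous_const.matrix_mul continuous_id).matrix_mul continuous_const
  have hMtend : Tendsto (fun k => M ^ k) atTop (nhds 0) := by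
    have h := (hcont.tendsto 0).comp hDtend
    simp only [Function.comp_def] at h
    have : (fun k => M ^ k) = fun k => U * diagonal (fun i => d i ^ k) * star U :=
      funext hMk
    rw [this]
    simpa using h
  have hcont2 : Continuous (fun B : Matrix (Fin P) (Fin P) ℝ => B.mulVec (β 0 - βs)) :=
    continuous_id.matrix_mulVec continuous_const
  have hvec : Tendsto (fun k => (M ^ k).mulVec (β 0 - βs)) atTop (nhds 0) := by
    have h := (hcont2.tendsto 0).comp hMtend
    simp only [Function.comp_def] at h
    simpa using h
  have : Tendsto (fun k => βs + (M ^ k).mulVec (β 0 - βs)) atTop (nhds βs) := by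
    have := tendsto_const_nhds (x := βs) (f := atTop (α := ℕ)) |>.add hvec
    simpa using this
  have hβ : β = fun k => βs + (M ^ k).mulVec (β 0 - βs) := funext hk
  rw [hβ]
  exact this
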